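/- Assume b₁, …, b₅ are pairwise distinct complex numbers. Let ι′ : ℂ[x, y₈] → ℂ[x, y₇, y₈] be the canonical inclusion of polynomial rings. Then the preimage (Ideal.comap ι′) of the ideal generated by f₁₄, f₁₅, f₁₆ is the principal ideal of ℂ[x, y₈] generated by y₈³ − k₃(x)²k₂(x). -/

import Mathlib

open MvPolynomial

/-- `k₃(x) = (x−b₁)(x−b₂)(x−b₃)` in `ℂ[x,y₇,y₈]` (variables `X 0 = x`, `X 1 = y₇`, `X 2 = y₈`). -/
noncomputable def k3X4 (b : Fin 5 → ℂ) : MvPolynomial (Fin 3) ℂ :=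
  (X 0 - C (b 0)) * (X 0 - C (b 1)) * (X 0 - C (b 2))

/-- `k₂(x) = (x−b₄)(x−b₅)` in `ℂ[x,y₇,y₈]`. -/
noncomputable def k2X4 (b : Fin 5 → ℂ) : MvPolynomial (Fin 3) ℂ :=
  (X 0 - C (b 3)) * (X 0 - C (b 4))

/-- `k₃(x)` in `ℂ[x,y₈]` (variables `X 0 = x`, `X 1 = y₈`). -/
noncomputable def k3X7 (b : Fin 5 → ℂ) : MvPolynomial (Fin 2) ℂ :=
  (X 0 - C (b 0)) * (X 0 - C (b 1)) * (X 0 - C (b 2))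

/-- `k₂(x)` in `ℂ[x,y₈]`. -/
noncomputable def k2X7 (b : Fin 5 → ℂ) : MvPolynomial (Fin 2) ℂ :=
  (X 0 - C (b 3)) * (X 0 - C (b 4))

namespace CompX4X7

/-- If a monic cubic `X^3 - C c` divides a polynomial of degree `< 3`, that polynomial is `0`. -/
lemma aux_small {A : Type*} [CommRing A] [Nontrivial A] {c : A} {p : Polynomial A}
    (h : ((Polynomial.X : Polynomial A) ^ 3 - Polynomial.C c) ∣ p) (hp : p.degree < 3) :
    p = 0 := by
  obtain ⟨q, rfl⟩ := h
  rcases eq_or_ne q 0 with rfl | hq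
  · simp
  · exfalso
    have hm : ((Polynomial.X : Polynomial A) ^ 3 - Polynomial.C c).Monic :=
      Polynomial.monic_X_pow_sub_C c (by norm_num)
    rw [mul_comm, hm.degree_mul, Polynomial.degree_X_pow_sub_C (by norm_num) c,
      Polynomial.degree_eq_natDegree hq] at hp
    norm_cast at hp

lemma nontrivial_adj {A : Type*} [CommRing A] [Nontrivial A] (c : A) :
    Nontrivial (AdjoinRoot ((Polynomial.X : Polynomial A) ^ 3 - Polynomial.C c)) := by
  refine ⟨1, 0, fun h => ?_⟩
  have h1 : (AdjoinRoot.mk ((Polynomial.X : Polynomial A) ^ 3 - Polynomial.C c))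
      (1 : Polynomial A) = 0 := by
    rw [map_one, h]
  have h2 := AdjoinRoot.mk_eq_zero.mp h1
  have h3 := aux_small h2 (by rw [Polynomial.degree_one]; decide)
  exact one_ne_zero h3

lemma coeffs_zero {A : Type*} [Semiring A] {s0 s1 s2 : A}
    (h : Polynomial.C s0 + Polynomial.C s1 * Polynomial.X +
      Polynomial.C s2 * Polynomial.X ^ 2 = 0) : s0 = 0 ∧ s1 = 0 ∧ s2 = 0 := by
  refine ⟨?_, ?_, ?_⟩
  · have := congrArg (fun p => Polynomial.coeff p 0) h
    simpa using this
  · have := congrArg (fun p => Polynomial.coeff p 1) h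
    simpa using this
  · have := congrArg (fun p => Polynomial.coeff p 2) h
    simpa using this

lemma single_coeff {A : Type*} [Semiring A] {s : A} {k : ℕ}
    (h : Polynomial.C s * Polynomial.X ^ k = 0) : s = 0 := by
  have := congrArg (fun p => Polynomial.coeff p k) h
  simpa using this

variable (b : Fin 5 → ℂ)

noncomputable def k2R : Polynomial ℂ :=
  (Polynomial.X - Polynomial.C (b 3)) * (Polynomial.X - Polynomial.C (b 4))

noncomputable def k3R : Polynomial ℂ :=
  (Polynomial.X - Polynomial.C (b 0)) * (Polynomial.X - Polynomial.C (b 1)) *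
    (Polynomial.X - Polynomial.C (b 2))

noncomputable abbrev Sb := AdjoinRoot ((Polynomial.X : Polynomial (Polynomial ℂ)) ^ 3 -
  Polynomial.C (k2R b))

noncomputable abbrev Tb := AdjoinRoot ((Polynomial.X : Polynomial (Sb b)) ^ 3 -
  Polynomial.C (algebraMap (Polynomial ℂ) (Sb b) (k3R b)))

instance : Nontrivial (Sb b) := nontrivial_adj _
instance : Nontrivial (Tb b) := nontrivial_adj _

noncomputable def uS : Sb b := AdjoinRoot.root _
noncomputable def uT : Tb b := algebraMap (Sb b) (Tb b) (uS b)
noncomputable def vT : Tb b := AdjoinRoot.root _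
noncomputable def ρ : Polynomial ℂ →ₐ[ℂ] Tb b :=
  (IsScalarTower.toAlgHom ℂ (Sb b) (Tb b)).comp (IsScalarTower.toAlgHom ℂ (Polynomial ℂ) (Sb b))
noncomputable def xT : Tb b := ρ b Polynomial.X

lemma huS : (uS b) ^ 3 = algebraMap (Polynomial ℂ) (Sb b) (k2R b) := by
  have h := AdjoinRoot.mk_self (f := (Polynomial.X : Polynomial (Polynomial ℂ)) ^ 3 -
    Polynomial.C (k2R b))
  rw [map_sub, map_pow, AdjoinRoot.mk_X, AdjoinRoot.mk_C, sub_eq_zero] at h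
  rw [uS, h, AdjoinRoot.algebraMap_eq]

lemma huT : (uT b) ^ 3 = ρ b (k2R b) := by
  rw [uT, ← map_pow, huS]; rfl

lemma hvT : (vT b) ^ 3 = ρ b (k3R b) := by
  have h := AdjoinRoot.mk_self (f := (Polynomial.X : Polynomial (Sb b)) ^ 3 -
    Polynomial.C (algebraMap (Polynomial ℂ) (Sb b) (k3R b)))
  rw [map_sub, map_pow, AdjoinRoot.mk_X, AdjoinRoot.mk_C, sub_eq_zero] at h
  rw [vT, h]; rfl

lemma hρC (a : ℂ) : ρ b (Polynomial.C a) = algebraMap ℂ (Tb b) a := by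
  have : Polynomial.C a = algebraMap ℂ (Polynomial ℂ) a := rfl
  rw [this, AlgHom.commutes]

/-- The evaluation map `ℂ[x,y₇,y₈] → T`. -/
noncomputable def ψ : MvPolynomial (Fin 3) ℂ →ₐ[ℂ] Tb b :=
  MvPolynomial.aeval ![xT b, uT b ^ 2 * vT b, uT b * vT b ^ 2]

lemma ψk2 : ψ b (k2X4 b) = ρ b (k2R b) := by
  simp [ψ, k2X4, k2R, map_mul, map_sub, hρC, xT]

lemma ψk3 : ψ b (k3X4 b) = ρ b (k3R b) := by
  simp [ψ, k3X4, k3R, map_mul, map_sub, hρC, xT]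

lemma ψ14 : ψ b ((X 1 : MvPolynomial (Fin 3) ℂ) ^ 2 - X 2 * k2X4 b) = 0 := by
  rw [map_sub, map_pow, map_mul, ψk2]
  simp only [ψ, MvPolynomial.aeval_X]
  show (uT b ^ 2 * vT b) ^ 2 - uT b * vT b ^ 2 * ρ b (k2R b) = 0
  linear_combination (uT b * vT b ^ 2) * huT b

lemma ψ15 : ψ b ((X 1 : MvPolynomial (Fin 3) ℂ) * X 2 - k2X4 b * k3X4 b) = 0 := by
  rw [map_sub, map_mul, map_mul, ψk2, ψk3]
  simp only [ψ, MvPolynomial.aeval_X]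
  show uT b ^ 2 * vT b * (uT b * vT b ^ 2) - ρ b (k2R b) * ρ b (k3R b) = 0
  linear_combination (vT b ^ 3) * huT b + (ρ b (k2R b)) * hvT b

lemma ψ16 : ψ b ((X 2 : MvPolynomial (Fin 3) ℂ) ^ 2 - X 1 * k3X4 b) = 0 := by
  rw [map_sub, map_pow, map_mul, ψk3]
  simp only [ψ, MvPolynomial.aeval_X]
  show (uT b * vT b ^ 2) ^ 2 - uT b ^ 2 * vT b * ρ b (k3R b) = 0
  linear_combination (uT b ^ 2 * vT b) * hvT b

noncomputable def A0 : Polynomial ℂ →ₐ[ℂ] MvPolynomial (Fin 2) ℂ :=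
  Polynomial.aeval (X 0)

noncomputable def Pb : MvPolynomial (Fin 2) ℂ := (X 1) ^ 3 - (k3X7 b) ^ 2 * k2X7 b

lemma hA0κ : A0 ((k3R b) ^ 2 * k2R b) = (k3X7 b) ^ 2 * k2X7 b := by
  simp [A0, k3R, k2R, k3X7, k2X7, map_mul, map_sub, map_pow]

/-- Division with remainder by `Pb` inside `ℂ[x,y₈]`. -/
lemma exists_rep (g : MvPolynomial (Fin 2) ℂ) :
    ∃ (q : MvPolynomial (Fin 2) ℂ) (c₀ c₁ c₂ : Polynomial ℂ),
      g = q * Pb b + A0 c₀ + A0 c₁ * X 1 + A0 c₂ * (X 1) ^ 2 := by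
  induction g using MvPolynomial.induction_on with
  | C a => exact ⟨0, Polynomial.C a, 0, 0, by simp [A0]⟩
  | add p q hp hq =>
    obtain ⟨q1, c0, c1, c2, rfl⟩ := hp
    obtain ⟨q2, d0, d1, d2, rfl⟩ := hq
    exact ⟨q1 + q2, c0 + d0, c1 + d1, c2 + d2, by simp [map_add]; ring⟩
  | mul_X p n hp =>
    obtain ⟨q, c0, c1, c2, rfl⟩ := hp
    fin_cases n
    · refine ⟨q * X 0, c0 * Polynomial.X, c1 * Polynomial.X, c2 * Polynomial.X, ?_⟩
      simp only [map_mul, A0, Polynomial.aeval_X, Fin.mk_zero, Fin.mk_one, Fin.isValue]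
      ring
    · refine ⟨q * X 1 + A0 c2, c2 * ((k3R b) ^ 2 * k2R b), c0, c1, ?_⟩
      rw [map_mul, hA0κ]
      simp only [Pb, Fin.mk_zero, Fin.mk_one, Fin.isValue]
      ring

end CompX4X7

open CompX4X7 in
set_option maxHeartbeats 2000000 in
/-- For pairwise distinct `b₁, …, b₅`, the preimage under the inclusion
`ι′ : ℂ[x, y₈] → ℂ[x, y₇, y₈]` (`x ↦ x`, `y₈ ↦ y₈`) of the ideal `(f₁₄, f₁₅, f₁₆)` is the
principal ideal generated by `y₈³ − k₃(x)²k₂(x)`. -/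
theorem comap_ideal_X4_to_X7 (b : Fin 5 → ℂ) (hb : Function.Injective b) :
    Ideal.comap
        ((MvPolynomial.aeval (![X 0, X 2] : Fin 2 → MvPolynomial (Fin 3) ℂ) :
          MvPolynomial (Fin 2) ℂ →ₐ[ℂ] MvPolynomial (Fin 3) ℂ).toRingHom)
        (Ideal.span {(X 1 : MvPolynomial (Fin 3) ℂ) ^ 2 - X 2 * k2X4 b,
          X 1 * X 2 - k2X4 b * k3X4 b,
          (X 2) ^ 2 - X 1 * k3X4 b}) =
      Ideal.span {(X 1 : MvPolynomial (Fin 2) ℂ) ^ 3 - (k3X7 b) ^ 2 * k2X7 b} := by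
  clear hb
  apply le_antisymm
  · -- hard direction: comap ≤ span
    intro g hg
    rw [Ideal.mem_comap] at hg
    have hle : Ideal.span {(X 1 : MvPolynomial (Fin 3) ℂ) ^ 2 - X 2 * k2X4 b,
          X 1 * X 2 - k2X4 b * k3X4 b,
          (X 2) ^ 2 - X 1 * k3X4 b} ≤ RingHom.ker (ψ b).toRingHom := by
      rw [Ideal.span_le]
      rintro x hx
      simp only [Set.mem_insert_iff, Set.mem_singleton_iff] at hx
      rcases hx with rfl | rfl | rfl
      · simpa [RingHom.mem_ker] using ψ14 b
      · simpa [RingHom.mem_ker] using ψ15 b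
      · simpa [RingHom.mem_ker] using ψ16 b
    have h0 : ψ b ((MvPolynomial.aeval (![X 0, X 2] : Fin 2 → MvPolynomial (Fin 3) ℂ)) g) = 0 := by
      have := hle hg
      simpa [RingHom.mem_ker] using this
    have hcomp : (ψ b).comp (MvPolynomial.aeval (![X 0, X 2] : Fin 2 → MvPolynomial (Fin 3) ℂ)) =
        MvPolynomial.aeval ![xT b, uT b * vT b ^ 2] := by
      apply MvPolynomial.algHom_ext
      intro i
      fin_cases i <;> simp [ψ]
    rw [← AlgHom.comp_apply, hcomp] at h0
    -- evaluation facts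
    have hwA : ∀ c : Polynomial ℂ,
        MvPolynomial.aeval ![xT b, uT b * vT b ^ 2] (A0 c) = ρ b c := by
      intro c
      show MvPolynomial.aeval ![xT b, uT b * vT b ^ 2] (Polynomial.aeval (X 0) c) = ρ b c
      rw [← Polynomial.aeval_algHom_apply (MvPolynomial.aeval ![xT b, uT b * vT b ^ 2]) (X 0) c]
      simp only [MvPolynomial.aeval_X, Matrix.cons_val_zero]
      rw [xT, Polynomial.aeval_algHom_apply (ρ b) Polynomial.X c, Polynomial.aeval_X_left,
        AlgHom.id_apply]
    have hk3w : MvPolynomial.aeval ![xT b, uT b * vT b ^ 2] (k3X7 b) = ρ b (k3R b) := by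
      simp [k3X7, k3R, map_mul, map_sub, hρC, xT]
    have hk2w : MvPolynomial.aeval ![xT b, uT b * vT b ^ 2] (k2X7 b) = ρ b (k2R b) := by
      simp [k2X7, k2R, map_mul, map_sub, hρC, xT]
    have hwP : MvPolynomial.aeval ![xT b, uT b * vT b ^ 2] (Pb b) = 0 := by
      rw [Pb, map_sub, map_pow, map_mul, map_pow, hk3w, hk2w]
      simp only [MvPolynomial.aeval_X, Matrix.cons_val_one, Matrix.head_cons, Matrix.cons_val_zero]
      linear_combination (vT b ^ 6) * huT b + (ρ b (k2R b)) * (vT b ^ 3 + ρ b (k3R b)) * hvT b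
    obtain ⟨q, c0, c1, c2, rfl⟩ := exists_rep b g
    simp only [map_add, map_mul, map_pow, hwP, hwA, mul_zero, zero_add,
      MvPolynomial.aeval_X, Matrix.cons_val_one, Matrix.head_cons, Matrix.cons_val_zero] at h0
    -- h0 : ρ c0 + ρ c1 * (uT vT²) + ρ c2 * (uT vT²)^2 = 0
    have key0 : ρ b c0 + (ρ b c1 * uT b) * vT b ^ 2 +
        (ρ b c2 * ρ b (k3R b) * uT b ^ 2) * vT b = 0 := by
      linear_combination h0 - (ρ b c2 * uT b ^ 2 * vT b) * hvT b
    have hρ' : ∀ r : Polynomial ℂ, ρ b r =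
        algebraMap (Sb b) (Tb b) (algebraMap (Polynomial ℂ) (Sb b) r) := fun _ => rfl
    have huT' : uT b = algebraMap (Sb b) (Tb b) (uS b) := rfl
    have hvT' : vT b = AdjoinRoot.root ((Polynomial.X : Polynomial (Sb b)) ^ 3 -
        Polynomial.C (algebraMap (Polynomial ℂ) (Sb b) (k3R b))) := rfl
    have key : (AdjoinRoot.mk ((Polynomial.X : Polynomial (Sb b)) ^ 3 -
        Polynomial.C (algebraMap (Polynomial ℂ) (Sb b) (k3R b))))
        (Polynomial.C (algebraMap (Polynomial ℂ) (Sb b) c0) +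
         Polynomial.C (algebraMap (Polynomial ℂ) (Sb b) (c2 * k3R b) * uS b ^ 2) * Polynomial.X +
         Polynomial.C (algebraMap (Polynomial ℂ) (Sb b) c1 * uS b) * Polynomial.X ^ 2) = 0 := by
      simp only [map_add, map_mul, map_pow, AdjoinRoot.mk_C, AdjoinRoot.mk_X,
        ← AdjoinRoot.algebraMap_eq]
      rw [← hvT']
      simp only [hρ', huT', map_mul] at key0 ⊢
      linear_combination key0
    have hdvd := AdjoinRoot.mk_eq_zero.mp key
    have hsmall : (Polynomial.C (algebraMap (Polynomial ℂ) (Sb b) c0) +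
         Polynomial.C (algebraMap (Polynomial ℂ) (Sb b) (c2 * k3R b) * uS b ^ 2) * Polynomial.X +
         Polynomial.C (algebraMap (Polynomial ℂ) (Sb b) c1 * uS b) * Polynomial.X ^ 2 :
         Polynomial (Sb b)) = 0 := by
      refine aux_small hdvd (lt_of_le_of_lt ?_ (by decide : (2 : WithBot ℕ) < 3))
      compute_degree
    obtain ⟨e0, e1, e2⟩ := coeffs_zero hsmall
    -- now descend to ℂ[x]
    have hc0 : c0 = 0 := by
      have hmk : (AdjoinRoot.mk ((Polynomial.X : Polynomial (Polynomial ℂ)) ^ 3 -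
          Polynomial.C (k2R b))) (Polynomial.C c0) = 0 := by
        rw [AdjoinRoot.mk_C, ← AdjoinRoot.algebraMap_eq]
        exact e0
      have := aux_small (AdjoinRoot.mk_eq_zero.mp hmk)
        (lt_of_le_of_lt Polynomial.degree_C_le (by decide : (0 : WithBot ℕ) < 3))
      exact Polynomial.C_eq_zero.mp this
    have hc1 : c1 = 0 := by
      have hmk : (AdjoinRoot.mk ((Polynomial.X : Polynomial (Polynomial ℂ)) ^ 3 -
          Polynomial.C (k2R b))) (Polynomial.C c1 * Polynomial.X ^ 1) = 0 := by
        rw [map_mul, map_pow, AdjoinRoot.mk_C, AdjoinRoot.mk_X, ← AdjoinRoot.algebraMap_eq,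
          pow_one]
        exact e2
      have h4 := aux_small (AdjoinRoot.mk_eq_zero.mp hmk)
        (lt_of_le_of_lt (by compute_degree) (by decide : (1 : WithBot ℕ) < 3))
      exact single_coeff h4
    have hc2 : c2 = 0 := by
      have hmk : (AdjoinRoot.mk ((Polynomial.X : Polynomial (Polynomial ℂ)) ^ 3 -
          Polynomial.C (k2R b))) (Polynomial.C (c2 * k3R b) * Polynomial.X ^ 2) = 0 := by
        rw [map_mul, map_pow, AdjoinRoot.mk_C, AdjoinRoot.mk_X, ← AdjoinRoot.algebraMap_eq]
        exact e1
      have h4 := aux_small (AdjoinRoot.mk_eq_zero.mp hmk)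
        (lt_of_le_of_lt (by compute_degree) (by decide : (2 : WithBot ℕ) < 3))
      have h5 : c2 * k3R b = 0 := single_coeff h4
      have hk3ne : k3R b ≠ 0 := by
        refine Polynomial.Monic.ne_zero ?_
        exact ((Polynomial.monic_X_sub_C _).mul (Polynomial.monic_X_sub_C _)).mul
          (Polynomial.monic_X_sub_C _)
      rcases mul_eq_zero.mp h5 with h | h
      · exact h
      · exact absurd h hk3ne
    subst hc0 hc1 hc2
    simp only [map_zero, zero_mul, add_zero]
    exact Ideal.mem_span_singleton.mpr (dvd_mul_left _ q)
  · -- easy direction: span ≤ comap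
    rw [Ideal.span_le, Set.singleton_subset_iff]
    rw [SetLike.mem_coe, Ideal.mem_comap]
    have hι3 : MvPolynomial.aeval (![X 0, X 2] : Fin 2 → MvPolynomial (Fin 3) ℂ) (k3X7 b) =
        k3X4 b := by
      simp [k3X7, k3X4, map_sub, map_mul]
    have hι2 : MvPolynomial.aeval (![X 0, X 2] : Fin 2 → MvPolynomial (Fin 3) ℂ) (k2X7 b) =
        k2X4 b := by
      simp [k2X7, k2X4, map_sub, map_mul]
    have hval : (MvPolynomial.aeval (![X 0, X 2] : Fin 2 → MvPolynomial (Fin 3) ℂ)).toRingHom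
        ((X 1 : MvPolynomial (Fin 2) ℂ) ^ 3 - (k3X7 b) ^ 2 * k2X7 b) =
        X 2 * ((X 2 : MvPolynomial (Fin 3) ℂ) ^ 2 - X 1 * k3X4 b) +
          k3X4 b * ((X 1 : MvPolynomial (Fin 3) ℂ) * X 2 - k2X4 b * k3X4 b) := by
      show MvPolynomial.aeval (![X 0, X 2] : Fin 2 → MvPolynomial (Fin 3) ℂ) _ = _
      rw [map_sub, map_pow, map_mul, map_pow, hι3, hι2]
      simp only [MvPolynomial.aeval_X, Matrix.cons_val_one, Matrix.head_cons, Matrix.cons_val_zero]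
      ring
    rw [hval]
    refine Ideal.add_mem _ (Ideal.mul_mem_left _ _ (Ideal.subset_span (by simp)))
      (Ideal.mul_mem_left _ _ (Ideal.subset_span (by simp)))
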